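/- Let n be a natural number, ω ∈ ℂ, and let q, p : ℝ → Matrix (Fin n) (Fin n) ℂ be differentiable functions satisfying q'(t) = p(t) and p'(t) = −ω²·q(t) for all t. Define the 2n×2n block matrices L(t) = fromBlocks (p t) (ω·q t) (ω·q t) (−p t) and M = fromBlocks 0 (−(ω/2)·1) ((ω/2)·1) 0. Then for all t, L'(t) = M·L(t) − L(t)·M. -/

import Mathlib

/-- The Lax matrix `L = [[p, ωq],[ωq, −p]]` of the matrix harmonic oscillator. -/
noncomputable def laxL (n : ℕ) (ω : ℂ) (P Q : Matrix (Fin n) (Fin n) ℂ) :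
    Matrix (Fin n ⊕ Fin n) (Fin n ⊕ Fin n) ℂ :=
  Matrix.fromBlocks P (ω • Q) (ω • Q) (-P)

/-- The matrix `M = [[0, −(ω/2)1],[(ω/2)1, 0]]` of the harmonic-oscillator Lax pair. -/
noncomputable def laxM (n : ℕ) (ω : ℂ) : Matrix (Fin n ⊕ Fin n) (Fin n ⊕ Fin n) ℂ :=
  Matrix.fromBlocks 0 ((-(ω / 2)) • 1) ((ω / 2) • 1) 0

lemma lax_comm (n : ℕ) (ω : ℂ) (P Q : Matrix (Fin n) (Fin n) ℂ) :
    laxM n ω * laxL n ω P Q - laxL n ω P Q * laxM n ω =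
      Matrix.fromBlocks ((-(ω ^ 2)) • Q) (ω • P) (ω • P) ((ω ^ 2) • Q) := by
  simp only [laxM, laxL, Matrix.fromBlocks_multiply, sub_eq_add_neg,
    Matrix.fromBlocks_neg, Matrix.fromBlocks_add]
  congr 1 <;>
    simp [Matrix.smul_mul, Matrix.mul_smul, smul_smul, Matrix.mul_one, Matrix.one_mul] <;>
    module

/-- Lax representation `L̇ = [M, L]` for the matrix harmonic oscillator: if
`q' = p` and `p' = −ω²q` (entrywise derivatives), then `L' = M·L − L·M`. -/
theorem harmonic_oscillator_lax (n : ℕ) (ω : ℂ)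
    (q p : ℝ → Matrix (Fin n) (Fin n) ℂ)
    (hq : ∀ (t : ℝ) (i j : Fin n), HasDerivAt (fun s => q s i j) (p t i j) t)
    (hp : ∀ (t : ℝ) (i j : Fin n),
      HasDerivAt (fun s => p s i j) (((-(ω ^ 2)) • q t) i j) t) :
    ∀ (t : ℝ) (a b : Fin n ⊕ Fin n),
      HasDerivAt (fun s => laxL n ω (p s) (q s) a b)
        ((laxM n ω * laxL n ω (p t) (q t) - laxL n ω (p t) (q t) * laxM n ω) a b) t := by
  intro t a b
  rw [lax_comm]
  rcases a with i | i <;> rcases b with j | j <;>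
    simp only [laxL, Matrix.fromBlocks_apply₁₁, Matrix.fromBlocks_apply₁₂,
      Matrix.fromBlocks_apply₂₁, Matrix.fromBlocks_apply₂₂,
      Matrix.smul_apply, Matrix.neg_apply, smul_eq_mul]
  · exact hp t i j
  · simpa [mul_comm] using (hq t i j).const_mul ω
  · simpa [mul_comm] using (hq t i j).const_mul ω
  · have := (hp t i j).neg
    simpa [Matrix.smul_apply, smul_eq_mul, Pi.neg_def] using this
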